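/- Let Ω := −(Λ·R div G) ∈ A[X] be the negated quotient in the division of Λ·R by the monic polynomial G. Then deg Ω ≤ t − 1, and every coefficient of Ω is a polynomial of total degree at most 1 in A which lies in the subring of A generated by F and the variables λ₀,…,λ_{t−1} (i.e. the coefficients of Ω are affine functions of the λ_j's, not involving the p_i's). -/

import Mathlib

open Polynomial

noncomputable def Lam (F : Type*) [CommRing F] (t k : ℕ) :
    Polynomial (MvPolynomial (Fin t ⊕ Fin k) F) :=
  X ^ t + ∑ j : Fin t, C (MvPolynomial.X (Sum.inl j)) * X ^ (j : ℕ)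

noncomputable def liftP (F : Type*) [CommRing F] (t k : ℕ) (f : Polynomial F) :
    Polynomial (MvPolynomial (Fin t ⊕ Fin k) F) :=
  f.map MvPolynomial.C

/-- `Ω`, the negated quotient in the division of `Λ·R` by the monic polynomial `G`. -/
noncomputable def Om (F : Type*) [Field F] (t k : ℕ) (R G : Polynomial F) :
    Polynomial (MvPolynomial (Fin t ⊕ Fin k) F) :=
  -((Lam F t k * liftP F t k R) /ₘ liftP F t k G)

/-- `Ω := −(Λ·R div G)` has degree ≤ t−1, and every coefficient of `Ω`
is a polynomial of total degree ≤ 1 involving only the variables `λ₀,…,λ_{t−1}`. -/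
theorem stmt4 (F : Type*) [Field F] (n t k : ℕ) (hn : 0 < n) (ht : 1 ≤ t) (hk : 1 ≤ k)
    (a b : Fin n → F) (ha : Function.Injective a)
    (G : Polynomial F) (hG : G = ∏ ℓ : Fin n, (X - C (a ℓ)))
    (R : Polynomial F) (hRdeg : R.degree < n) (hR : ∀ ℓ, R.eval (a ℓ) = b ℓ) :
    (Om F t k R G).degree ≤ ((t - 1 : ℕ) : WithBot ℕ) ∧
    ∀ i : ℕ, ((Om F t k R G).coeff i).totalDegree ≤ 1 ∧
      (Om F t k R G).coeff i ∈
        MvPolynomial.supported F {v : Fin t ⊕ Fin k | ∃ j : Fin t, v = Sum.inl j} := by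
  have hGm : G.Monic := by
    rw [hG]; exact monic_prod_of_monic _ _ fun ℓ _ => monic_X_sub_C _
  have hGn : G.natDegree = n := by
    rw [hG, natDegree_prod _ _ fun ℓ _ => X_sub_C_ne_zero (a ℓ)]
    simp
  have hCinj : Function.Injective (MvPolynomial.C : F →+* MvPolynomial (Fin t ⊕ Fin k) F) :=
    MvPolynomial.C_injective _ _
  set lift := liftP F t k with hlift
  have hliftGm : (lift G).Monic := hGm.map _
  -- pieces
  set Qf : ℕ → Polynomial F := fun j => (R * X ^ j) /ₘ G with hQf
  set Mf : ℕ → Polynomial F := fun j => (R * X ^ j) %ₘ G with hMf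
  set q : Polynomial (MvPolynomial (Fin t ⊕ Fin k) F) :=
    lift (Qf t) + ∑ j : Fin t, C (MvPolynomial.X (Sum.inl j)) * lift (Qf j) with hq
  set r : Polynomial (MvPolynomial (Fin t ⊕ Fin k) F) :=
    lift (Mf t) + ∑ j : Fin t, C (MvPolynomial.X (Sum.inl j)) * lift (Mf j) with hrr
  have hsplit : ∀ j : ℕ, lift (Mf j) + lift G * lift (Qf j) = lift R * X ^ j := by
    intro j
    rw [hlift]
    simp only [liftP, ← Polynomial.map_mul, ← Polynomial.map_add]
    rw [modByMonic_add_div _ G]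
    simp [Polynomial.map_mul]
  have h1 : r + lift G * q = Lam F t k * lift R := by
    rw [hq, hrr, Lam, add_mul, Finset.sum_mul, mul_add, Finset.mul_sum,
      add_add_add_comm, ← Finset.sum_add_distrib]
    congr 1
    · rw [hsplit t]; ring
    · refine Finset.sum_congr rfl fun j _ => ?_
      rw [show C (MvPolynomial.X (Sum.inl j)) * lift (Mf ↑j) +
          lift G * (C (MvPolynomial.X (Sum.inl j)) * lift (Qf ↑j)) =
          C (MvPolynomial.X (Sum.inl j)) * (lift (Mf ↑j) + lift G * lift (Qf ↑j)) by ring,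
        hsplit j]
      ring
  have hdegC : ∀ (c : MvPolynomial (Fin t ⊕ Fin k) F)
      (p : Polynomial (MvPolynomial (Fin t ⊕ Fin k) F)), (C c * p).degree ≤ p.degree := by
    intro c p
    calc (C c * p).degree ≤ degree (C c) + p.degree := degree_mul_le _ _
    _ ≤ 0 + p.degree := add_le_add (degree_C_le) le_rfl
    _ = p.degree := by rw [zero_add]
  have hdegmap : ∀ p : Polynomial F, (lift p).degree = p.degree := fun p =>
    degree_map_eq_of_injective hCinj p
  have hdG : (n : WithBot ℕ) = (lift G).degree := by
    rw [hdegmap, degree_eq_natDegree hGm.ne_zero, hGn]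
  have h2 : r.degree < (lift G).degree := by
    rw [← hdG, hrr]
    have hM : ∀ j : ℕ, (lift (Mf j)).degree < (n : WithBot ℕ) := by
      intro j
      rw [hdegmap, hMf]
      calc ((R * X ^ j) %ₘ G).degree < G.degree := degree_modByMonic_lt _ hGm
      _ = (n : WithBot ℕ) := by rw [degree_eq_natDegree hGm.ne_zero, hGn]
    refine lt_of_le_of_lt (degree_add_le _ _) (max_lt (hM t) ?_)
    refine lt_of_le_of_lt (degree_sum_le _ _) ?_
    rw [Finset.sup_lt_iff (by exact_mod_cast WithBot.bot_lt_coe n)]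
    exact fun j _ => lt_of_le_of_lt (hdegC _ _) (hM j)
  have hdiv : (Lam F t k * lift R) /ₘ lift G = q :=
    (div_modByMonic_unique q r hliftGm ⟨h1, h2⟩).1
  have hOm : Om F t k R G = -q := by rw [Om, ← hlift, hdiv]
  -- degree bounds on the pieces
  have hRn : R.natDegree ≤ n - 1 := by
    rcases eq_or_ne R 0 with h | h
    · simp [h]
    · exact Nat.le_sub_one_of_lt (natDegree_lt_iff_degree_lt h |>.2 (by exact_mod_cast hRdeg))
  have hQdeg : ∀ j : ℕ, j ≤ t → (lift (Qf j)).degree ≤ ((t - 1 : ℕ) : WithBot ℕ) := by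
    intro j hj
    rw [hdegmap]
    refine le_trans (degree_le_natDegree) ?_
    rw [Nat.cast_le, hQf, natDegree_divByMonic _ hGm, hGn]
    have : (R * X ^ j).natDegree ≤ (n - 1) + j :=
      le_trans (natDegree_mul_le) (by simpa using Nat.add_le_add hRn (le_refl j))
    omega
  constructor
  · rw [hOm, degree_neg, hq]
    refine le_trans (degree_add_le _ _) (max_le (hQdeg t le_rfl) ?_)
    refine le_trans (degree_sum_le _ _) (Finset.sup_le fun j _ => ?_)
    exact le_trans (hdegC _ _) (hQdeg j (le_of_lt j.2))
  · intro i
    have hcoeff : (Om F t k R G).coeff i =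
        -(MvPolynomial.C ((Qf t).coeff i) +
          ∑ j : Fin t, MvPolynomial.X (Sum.inl j) * MvPolynomial.C ((Qf (j : ℕ)).coeff i)) := by
      rw [hOm, hq, coeff_neg, coeff_add, finset_sum_coeff]
      simp [hlift, liftP, coeff_map, coeff_C_mul]
    constructor
    · rw [hcoeff, MvPolynomial.totalDegree_neg]
      refine le_trans (MvPolynomial.totalDegree_add _ _) (max_le (by simp) ?_)
      refine le_trans (MvPolynomial.totalDegree_finset_sum _ _) (Finset.sup_le fun j _ => ?_)
      refine le_trans (MvPolynomial.totalDegree_mul _ _) ?_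
      simp [MvPolynomial.totalDegree_X]
    · rw [hcoeff]
      refine neg_mem (add_mem ?_ (Subalgebra.sum_mem _ fun j _ => mul_mem ?_ ?_))
      · exact Subalgebra.algebraMap_mem _ _
      · exact MvPolynomial.X_mem_supported.2 ⟨j, rfl⟩
      · exact Subalgebra.algebraMap_mem _ _
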